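/- For any integer r ≥ 2, any real number δ > 0, and any real numbers x_1, …, x_r, the integral over t ∈ ℝ of min( δ / ∏_{i=1}^{r} |t − x_i| , 1 ) dt is at most 4 r δ^{1/r}. -/

import Mathlib

open MeasureTheory Set

private lemma integrable_comp_abs' {f : ℝ → ℝ} (hf : IntegrableOn (fun x => f |x|) (Ioi 0)) :
    Integrable (fun x => f |x|) := by
  have int_Iic : IntegrableOn (fun x ↦ f |x|) (Iic 0) := by
    rw [← Measure.map_neg_eq_self (volume : Measure ℝ)]
    have m : MeasurableEmbedding fun x : ℝ => -x := (Homeomorph.neg ℝ).measurableEmbedding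
    rw [m.integrableOn_map_iff]
    simp_rw [Function.comp_def, abs_neg, neg_preimage, neg_Iic, neg_zero]
    exact Iff.mpr integrableOn_Ici_iff_integrableOn_Ioi hf
  rw [← integrableOn_univ, ← Iic_union_Ioi (a := (0:ℝ))]
  exact int_Iic.union hf

private lemma key (r : ℕ) (hr : 2 ≤ r) {δ : ℝ} (hδ : 0 < δ) :
    Integrable (fun t : ℝ => min (δ / |t| ^ r) 1) ∧
      ∫ t : ℝ, min (δ / |t| ^ r) 1 ≤ 4 * δ ^ ((r : ℝ)⁻¹) := by
  set a : ℝ := δ ^ ((r : ℝ)⁻¹) with ha_def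
  have ha : 0 < a := Real.rpow_pos_of_pos hδ _
  have hr0 : (r : ℝ) ≠ 0 := by positivity
  have hrR : (2 : ℝ) ≤ (r : ℝ) := by exact_mod_cast hr
  set F : ℝ → ℝ := fun s => min (δ / s ^ r) 1 with hF_def
  have measF : Measurable F :=
    (measurable_const.div ((measurable_id.pow_const r))).min measurable_const
  -- exponent arithmetic
  have hexp : (r : ℝ)⁻¹ * (-(r : ℝ) + 1) = -1 + (r : ℝ)⁻¹ := by
    have : (r : ℝ)⁻¹ * (r : ℝ) = 1 := inv_mul_cancel₀ hr0
    ring_nf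
    ring_nf at this
    nlinarith [this]
  have key_eq : δ * a ^ (-(r : ℝ) + 1) = a := by
    rw [ha_def, ← Real.rpow_mul hδ.le, hexp, Real.rpow_add hδ, Real.rpow_neg_one]
    field_simp
  -- integrability on Ioc 0 a
  have int_Ioc : IntegrableOn F (Ioc 0 a) := by
    apply Integrable.mono' (g := fun _ => (1:ℝ))
        (integrableOn_const measure_Ioc_lt_top.ne)
        measF.aestronglyMeasurable.restrict
    filter_upwards [ae_restrict_mem measurableSet_Ioc] with s hs
    rw [Real.norm_eq_abs,
      abs_of_nonneg (le_min (div_nonneg hδ.le (pow_nonneg hs.1.le r)) zero_le_one)]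
    exact min_le_right _ _
  -- the tail bound function
  have base : IntegrableOn (fun t : ℝ => δ * t ^ (-(r:ℝ))) (Ioi a) :=
    (integrableOn_Ioi_rpow_of_lt (by linarith) ha).const_mul δ
  have tail_le : ∀ s ∈ Ioi a, F s ≤ δ * s ^ (-(r:ℝ)) := by
    intro s hs
    have hs0 : 0 < s := ha.trans hs
    have : δ / s ^ r = δ * s ^ (-(r:ℝ)) := by
      rw [Real.rpow_neg hs0.le, Real.rpow_natCast, div_eq_mul_inv]
    exact this ▸ min_le_left _ _
  have int_Ioi : IntegrableOn F (Ioi a) := by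
    apply Integrable.mono' base measF.aestronglyMeasurable.restrict
    filter_upwards [ae_restrict_mem measurableSet_Ioi] with s hs
    have hs0 : 0 < s := ha.trans hs
    rw [Real.norm_eq_abs,
      abs_of_nonneg (le_min (div_nonneg hδ.le (pow_nonneg hs0.le r)) zero_le_one)]
    exact tail_le s hs
  have int_Ioi0 : IntegrableOn F (Ioi 0) := by
    rw [← Ioc_union_Ioi_eq_Ioi ha.le]
    exact int_Ioc.union int_Ioi
  have habs : ∀ t : ℝ, min (δ / |t| ^ r) 1 = F |t| := fun t => rfl
  have int_abs_Ioi : IntegrableOn (fun t => F |t|) (Ioi 0) := by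
    apply int_Ioi0.congr_fun _ measurableSet_Ioi
    intro s hs
    show F s = F |s|
    rw [abs_of_pos hs]
  have int_g : Integrable (fun t : ℝ => F |t|) := integrable_comp_abs' int_abs_Ioi
  constructor
  · exact int_g
  -- integral computation
  have h1 : ∫ t : ℝ, F |t| = 2 * ∫ s in Ioi (0:ℝ), F s := integral_comp_abs
  have hsplit : (∫ s in Ioi (0:ℝ), F s) =
      (∫ s in Ioc (0:ℝ) a, F s) + ∫ s in Ioi a, F s := by
    rw [← Ioc_union_Ioi_eq_Ioi ha.le,
      setIntegral_union (Ioc_disjoint_Ioi le_rfl) measurableSet_Ioi int_Ioc int_Ioi]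
  have h2 : (∫ s in Ioc (0:ℝ) a, F s) ≤ a := by
    calc (∫ s in Ioc (0:ℝ) a, F s) ≤ ∫ _ in Ioc (0:ℝ) a, (1:ℝ) := by
          apply setIntegral_mono_on int_Ioc (integrableOn_const measure_Ioc_lt_top.ne)
            measurableSet_Ioc
          intro s _; exact min_le_right _ _
      _ = a := by simp [Real.volume_Ioc, ha.le]
  have h3 : (∫ s in Ioi a, F s) ≤ a := by
    calc (∫ s in Ioi a, F s) ≤ ∫ s in Ioi a, δ * s ^ (-(r:ℝ)) :=
          setIntegral_mono_on int_Ioi base measurableSet_Ioi tail_le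
      _ = δ * ∫ s in Ioi a, s ^ (-(r:ℝ)) := by rw [integral_const_mul]
      _ = δ * (-a ^ (-(r:ℝ) + 1) / (-(r:ℝ) + 1)) := by
          rw [integral_Ioi_rpow_of_lt (by linarith) ha]
      _ = δ * a ^ (-(r:ℝ) + 1) / ((r:ℝ) - 1) := by
          have h1 : -(r:ℝ) + 1 ≠ 0 := by linarith
          have h2 : (r:ℝ) - 1 ≠ 0 := by linarith
          field_simp
          ring
      _ = a / ((r:ℝ) - 1) := by rw [key_eq]
      _ ≤ a := div_le_self ha.le (by linarith)
  calc ∫ t : ℝ, min (δ / |t| ^ r) 1 = 2 * ∫ s in Ioi (0:ℝ), F s := h1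
    _ = 2 * ((∫ s in Ioc (0:ℝ) a, F s) + ∫ s in Ioi a, F s) := by rw [hsplit]
    _ ≤ 2 * (a + a) := by linarith
    _ = 4 * a := by ring

theorem stmt_8 (r : ℕ) (hr : 2 ≤ r) (δ : ℝ) (hδ : 0 < δ) (x : Fin r → ℝ) :
    ∫ t : ℝ, min (δ / ∏ i, |t - x i|) 1 ≤ 4 * r * δ ^ ((r : ℝ)⁻¹) := by
  obtain ⟨int_g, int_le⟩ := key r hr hδ
  have hrpos : 0 < r := by omega
  haveI : Nonempty (Fin r) := ⟨⟨0, hrpos⟩⟩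
  set G : ℝ → ℝ := fun t => min (δ / |t| ^ r) 1 with hG_def
  -- pointwise bound
  have hpt : ∀ t : ℝ, min (δ / ∏ i, |t - x i|) 1 ≤ ∑ i, G (t - x i) := by
    intro t
    obtain ⟨i, _, hi⟩ := Finset.exists_min_image Finset.univ (fun i => |t - x i|)
      Finset.univ_nonempty
    have hnn : ∀ j ∈ Finset.univ, (0:ℝ) ≤ min (δ / |t - x j| ^ r) 1 := by
      intro j _
      exact le_min (div_nonneg hδ.le (pow_nonneg (abs_nonneg _) r)) zero_le_one
    have step1 : min (δ / ∏ j, |t - x j|) 1 ≤ G (t - x i) := by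
      have hprod : |t - x i| ^ r ≤ ∏ j, |t - x j| := by
        calc |t - x i| ^ r = ∏ _j : Fin r, |t - x i| := by
              rw [Finset.prod_const, Finset.card_univ, Fintype.card_fin]
          _ ≤ ∏ j, |t - x j| := Finset.prod_le_prod (fun j _ => abs_nonneg _)
              (fun j hj => hi j hj)
      rcases eq_or_lt_of_le (abs_nonneg (t - x i)) with h0 | h0
      · have hz : ∏ j, |t - x j| = 0 :=
          Finset.prod_eq_zero (Finset.mem_univ i) (by rw [← h0])
        have hz2 : min (δ / ∏ j, |t - x j|) 1 = 0 := by
          rw [hz, div_zero]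
          exact min_eq_left zero_le_one
        rw [hz2]
        exact hnn i (Finset.mem_univ i)
      · apply min_le_min_right
        exact div_le_div_of_nonneg_left hδ.le (pow_pos h0 r) hprod
    calc min (δ / ∏ j, |t - x j|) 1 ≤ G (t - x i) := step1
      _ ≤ ∑ j, G (t - x j) := Finset.single_le_sum (f := fun j => G (t - x j))
          (fun j hj => hnn j hj) (Finset.mem_univ i)
  have int_each : ∀ i : Fin r, Integrable (fun t => G (t - x i)) := fun i =>
    int_g.comp_sub_right (x i)
  have int_sum : Integrable (fun t : ℝ => ∑ i, G (t - x i)) :=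
    integrable_finset_sum _ (fun i _ => int_each i)
  have hmono : ∫ t : ℝ, min (δ / ∏ i, |t - x i|) 1 ≤ ∫ t : ℝ, ∑ i, G (t - x i) := by
    apply integral_mono_of_nonneg _ int_sum _
    · filter_upwards with t
      exact le_min (div_nonneg hδ.le (Finset.prod_nonneg fun j _ => abs_nonneg _)) zero_le_one
    · filter_upwards with t
      exact hpt t
  calc ∫ t : ℝ, min (δ / ∏ i, |t - x i|) 1 ≤ ∫ t : ℝ, ∑ i, G (t - x i) := hmono
    _ = ∑ i, ∫ t : ℝ, G (t - x i) := integral_finset_sum _ (fun i _ => int_each i)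
    _ = ∑ _i : Fin r, ∫ t : ℝ, G t := by
        refine Finset.sum_congr rfl fun i _ => ?_
        exact integral_sub_right_eq_self G (x i)
    _ = r * ∫ t : ℝ, G t := by
        rw [Finset.sum_const, Finset.card_univ, Fintype.card_fin, nsmul_eq_mul]
    _ ≤ r * (4 * δ ^ ((r:ℝ)⁻¹)) := by
        apply mul_le_mul_of_nonneg_left int_le (by positivity)
    _ = 4 * r * δ ^ ((r:ℝ)⁻¹) := by ring
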